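/- Suppose A is a family of subsets of {1,...,n} such that |A \ B| ≠ 2|B \ A| for all distinct A, B in the family. Then |A| ≤ (1 + o(1)) · C(n, ⌊n/2⌋) as n → ∞. Concretely: for every ε > 0 there exists N such that for all n ≥ N, any such family satisfies |A| ≤ (1+ε) · C(n, ⌊n/2⌋). -/

import Mathlib

open Finset

lemma cardIval (n a b : ℕ) (hb : b ≤ n) :
    (Finset.univ.filter fun x : Fin n => a ≤ x.val ∧ x.val < b).card = b - a := by
  rw [← Nat.card_Ico a b]
  apply Finset.card_nbij (i := fun x => x.val)
  · intro x hx
    simp only [mem_coe, mem_filter, mem_univ, true_and] at hx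
    simp only [mem_coe, mem_Ico]; omega
  · intro x _ y _ hxy; exact Fin.val_injective hxy
  · intro v hv
    simp only [coe_Ico, Set.mem_Ico] at hv
    exact ⟨⟨v, by omega⟩, by simp only [coe_filter, Set.mem_setOf_eq, mem_univ, true_and]; exact hv, rfl⟩

/-- the interval `[t, k₀+2t)` inside `Fin n` -/
def Iv (n k₀ t : ℕ) : Finset (Fin n) :=
  Finset.univ.filter fun x : Fin n => t ≤ x.val ∧ x.val < k₀ + 2*t

lemma Iv_card {n k₀ t : ℕ} (h : k₀ + 2*t ≤ n) : (Iv n k₀ t).card = k₀ + t := by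
  rw [Iv, cardIval n _ _ h]; omega

lemma Iv_sdiff₁ {n k₀ m i j : ℕ} (hij : i ≤ j) (hjm : j ≤ m) (hmk : m ≤ k₀)
    (hn : k₀ + 2*m ≤ n) : ((Iv n k₀ j) \ (Iv n k₀ i)).card = 2*j - 2*i := by
  have : (Iv n k₀ j) \ (Iv n k₀ i)
      = Finset.univ.filter fun x : Fin n => k₀ + 2*i ≤ x.val ∧ x.val < k₀ + 2*j := by
    ext x
    simp only [Iv, mem_sdiff, mem_filter, mem_univ, true_and]
    omega
  rw [this, cardIval n _ _ (by omega)]; omega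

lemma Iv_sdiff₂ {n k₀ m i j : ℕ} (hij : i ≤ j) (hjm : j ≤ m) (hmk : m ≤ k₀)
    (hn : k₀ + 2*m ≤ n) : ((Iv n k₀ i) \ (Iv n k₀ j)).card = j - i := by
  have : (Iv n k₀ i) \ (Iv n k₀ j)
      = Finset.univ.filter fun x : Fin n => i ≤ x.val ∧ x.val < j := by
    ext x
    simp only [Iv, mem_sdiff, mem_filter, mem_univ, true_and]
    omega
  rw [this, cardIval n _ _ (by omega)]

lemma atMostOne {n k₀ m : ℕ} (hmk : m ≤ k₀) (hn : k₀ + 2*m ≤ n)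
    (𝒜 : Finset (Finset (Fin n)))
    (h𝒜 : ∀ A ∈ 𝒜, ∀ B ∈ 𝒜, A ≠ B → (A \ B).card ≠ 2 * (B \ A).card)
    (π : Equiv.Perm (Fin n)) :
    ((Finset.range (m+1)).filter fun t => (Iv n k₀ t).image π ∈ 𝒜).card ≤ 1 := by
  rw [Finset.card_le_one]
  intro t1 h1 t2 h2
  simp only [mem_filter, Finset.mem_range] at h1 h2
  by_contra hne
  -- wlog t1 < t2
  have key : ∀ i j : ℕ, i < j → j ≤ m → (Iv n k₀ i).image π ∈ 𝒜 → (Iv n k₀ j).image π ∈ 𝒜 → False := by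
    intro i j hij hjm hiA hjA
    have hinj : Function.Injective π := π.injective
    have hc1 : (((Iv n k₀ j).image π) \ ((Iv n k₀ i).image π)).card = 2*j - 2*i := by
      rw [← Finset.image_sdiff _ _ hinj, Finset.card_image_of_injective _ hinj]
      exact Iv_sdiff₁ (le_of_lt hij) hjm hmk hn
    have hc2 : (((Iv n k₀ i).image π) \ ((Iv n k₀ j).image π)).card = j - i := by
      rw [← Finset.image_sdiff _ _ hinj, Finset.card_image_of_injective _ hinj]
      exact Iv_sdiff₂ (le_of_lt hij) hjm hmk hn
    have hne' : (Iv n k₀ j).image π ≠ (Iv n k₀ i).image π := by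
      intro heq
      rw [heq, Finset.sdiff_self] at hc1
      simp at hc1; omega
    have := h𝒜 _ hjA _ hiA hne'
    rw [hc1, hc2] at this
    omega
  rcases Nat.lt_trichotomy t1 t2 with h | h | h
  · exact key t1 t2 h (by omega) h1.2 h2.2
  · exact hne (by rw [h])
  · exact key t2 t1 h (by omega) h2.2 h1.2


lemma fiber_lower (n : ℕ) (I S : Finset (Fin n)) (hc : I.card = S.card) :
    Nat.factorial I.card * Nat.factorial (n - I.card) ≤
      (Finset.univ.filter fun π : Equiv.Perm (Fin n) => I.image π = S).card := by
  classical
  -- equivalences between subtypes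
  have hccompl : Fintype.card ↥(Iᶜ) = Fintype.card ↥(Sᶜ) := by
    simp only [Fintype.card_coe, Finset.card_compl, hc]
  have hcIS : Fintype.card ↥I = Fintype.card ↥S := by
    simp only [Fintype.card_coe, hc]
  let e : ↥I ≃ ↥S := Fintype.equivOfCardEq hcIS
  let ec : ↥(Iᶜ) ≃ ↥(Sᶜ) := Fintype.equivOfCardEq hccompl
  let cI : {x : Fin n // ¬ x ∈ I} ≃ ↥(Iᶜ) :=
    Equiv.subtypeEquivRight (fun x => (Finset.mem_compl).symm)
  let cS : {x : Fin n // ¬ x ∈ S} ≃ ↥(Sᶜ) :=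
    Equiv.subtypeEquivRight (fun x => (Finset.mem_compl).symm)
  -- the gluing map
  let Φ : Equiv.Perm ↥I × Equiv.Perm ↥(Iᶜ) → Equiv.Perm (Fin n) := fun p =>
    (Equiv.sumCompl (fun x => x ∈ I)).symm.trans
      ((Equiv.sumCongr ((p.1.trans e) : ↥I ≃ ↥S)
        ((cI.trans ((p.2.trans ec).trans cS.symm)) : {x : Fin n // ¬ x ∈ I} ≃ {x : Fin n // ¬ x ∈ S})).trans
        (Equiv.sumCompl (fun x => x ∈ S)))
  have hΦpos : ∀ p (x : Fin n) (hx : x ∈ I), Φ p x = ↑(e (p.1 ⟨x, hx⟩)) := by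
    intro p x hx
    simp only [Φ, Equiv.trans_apply, Equiv.sumCompl_symm_apply_of_pos hx,
      Equiv.sumCongr_apply, Sum.map_inl, Equiv.sumCompl_apply_inl]
  have hΦneg : ∀ p (x : Fin n) (hx : ¬ x ∈ I), Φ p x = ↑(cS.symm ((p.2.trans ec) (cI ⟨x, hx⟩))) := by
    intro p x hx
    simp only [Φ, Equiv.trans_apply, Equiv.sumCompl_symm_apply_of_neg hx,
      Equiv.sumCongr_apply, Sum.map_inr, Equiv.sumCompl_apply_inr]
  have hΦmem : ∀ p, I.image (Φ p) = S := by
    intro p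
    apply Finset.eq_of_subset_of_card_le
    · intro y hy
      rw [Finset.mem_image] at hy
      obtain ⟨x, hx, rfl⟩ := hy
      rw [hΦpos p x hx]
      exact Finset.coe_mem _
    · rw [Finset.card_image_of_injective _ (Φ p).injective, hc]
  have hΦinj : Function.Injective Φ := by
    intro p q hpq
    have h1 : p.1 = q.1 := by
      apply Equiv.ext
      intro a
      have := congrArg (fun π : Equiv.Perm (Fin n) => π ↑a) hpq
      try simp only at this
      rw [hΦpos p ↑a a.2, hΦpos q ↑a a.2] at this
      have := e.injective (Subtype.coe_injective this)
      simpa using this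
    have h2 : p.2 = q.2 := by
      apply Equiv.ext
      intro a
      have ha : ¬ (↑(cI.symm a) : Fin n) ∈ I := (cI.symm a).2
      have := congrArg (fun π : Equiv.Perm (Fin n) => π ↑(cI.symm a)) hpq
      try simp only at this
      rw [hΦneg p _ ha, hΦneg q _ ha] at this
      have h' := (cS.symm).injective (Subtype.coe_injective this)
      simp only [Equiv.apply_symm_apply, Equiv.trans_apply] at h'
      exact ec.injective h'
    exact Prod.ext h1 h2
  -- count
  have hinj2 : Function.Injective
      (fun p : Equiv.Perm ↥I × Equiv.Perm ↥(Iᶜ) =>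
        (⟨Φ p, hΦmem p⟩ : {π : Equiv.Perm (Fin n) // I.image π = S})) := by
    intro p q h
    exact hΦinj (congrArg Subtype.val h)
  have hcard := Fintype.card_le_of_injective _ hinj2
  rw [Fintype.card_prod, Fintype.card_perm, Fintype.card_perm, Fintype.card_coe,
    Fintype.card_coe, Finset.card_compl, Fintype.card_fin] at hcard
  calc Nat.factorial I.card * Nat.factorial (n - I.card) ≤ _ := hcard
    _ = _ := Fintype.card_subtype _

lemma middle_bound {n k₀ m : ℕ} (hmk : m ≤ k₀) (hn : k₀ + 2*m ≤ n)
    (𝒜 : Finset (Finset (Fin n)))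
    (h𝒜 : ∀ A ∈ 𝒜, ∀ B ∈ 𝒜, A ≠ B → (A \ B).card ≠ 2 * (B \ A).card) :
    (𝒜.filter fun S => k₀ ≤ S.card ∧ S.card ≤ k₀ + m).card ≤ n.choose (n/2) := by
  classical
  -- step 1: total over permutations
  have hswap : ∑ t ∈ Finset.range (m+1),
        (Finset.univ.filter fun π : Equiv.Perm (Fin n) => (Iv n k₀ t).image π ∈ 𝒜).card
      = ∑ π : Equiv.Perm (Fin n),
        ((Finset.range (m+1)).filter fun t => (Iv n k₀ t).image π ∈ 𝒜).card := by
    simp_rw [Finset.card_filter]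
    exact Finset.sum_comm
  have htotal : ∑ t ∈ Finset.range (m+1),
        (Finset.univ.filter fun π : Equiv.Perm (Fin n) => (Iv n k₀ t).image π ∈ 𝒜).card
      ≤ Nat.factorial n := by
    rw [hswap]
    calc ∑ π : Equiv.Perm (Fin n), ((Finset.range (m+1)).filter fun t => (Iv n k₀ t).image π ∈ 𝒜).card
        ≤ ∑ _π : Equiv.Perm (Fin n), 1 :=
          Finset.sum_le_sum (fun π _ => atMostOne hmk hn 𝒜 h𝒜 π)
      _ = Fintype.card (Equiv.Perm (Fin n)) := by simp
      _ = Nat.factorial n := by rw [Fintype.card_perm, Fintype.card_fin]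
  -- step 2: per-level lower bound
  have hfib : ∀ t ∈ Finset.range (m+1),
      (𝒜.filter fun S => S.card = k₀ + t).card * (Nat.factorial (k₀+t) * Nat.factorial (n - (k₀+t)))
        ≤ (Finset.univ.filter fun π : Equiv.Perm (Fin n) => (Iv n k₀ t).image π ∈ 𝒜).card := by
    intro t ht
    rw [Finset.mem_range] at ht
    have hIc : (Iv n k₀ t).card = k₀ + t := Iv_card (by omega)
    rw [Finset.card_eq_sum_card_fiberwise
      (f := fun π : Equiv.Perm (Fin n) => (Iv n k₀ t).image π)
      (t := 𝒜.filter fun S => S.card = k₀ + t)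
      (by intro π hπ
          rw [Finset.mem_coe] at hπ ⊢
          rw [Finset.mem_filter] at hπ ⊢
          refine ⟨hπ.2, ?_⟩
          rw [Finset.card_image_of_injective _ π.injective, hIc])]
    calc (𝒜.filter fun S => S.card = k₀ + t).card * (Nat.factorial (k₀+t) * Nat.factorial (n - (k₀+t)))
        = ∑ _S ∈ 𝒜.filter fun S => S.card = k₀ + t,
            (Nat.factorial (k₀+t) * Nat.factorial (n - (k₀+t))) := by
          rw [Finset.sum_const, smul_eq_mul]
      _ ≤ _ := by
          apply Finset.sum_le_sum
          intro S hS
          rw [Finset.mem_filter] at hS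
          have hsub : (Finset.univ.filter fun π : Equiv.Perm (Fin n) => (Iv n k₀ t).image π = S)
              ⊆ (Finset.univ.filter fun π : Equiv.Perm (Fin n) => (Iv n k₀ t).image π ∈ 𝒜).filter
                (fun π => (Iv n k₀ t).image π = S) := by
            intro π hπ
            rw [Finset.mem_filter] at hπ
            rw [Finset.mem_filter, Finset.mem_filter]
            have h2 := hπ.2
            exact ⟨⟨hπ.1, by rw [h2]; exact hS.1⟩, h2⟩
          have hlow := fiber_lower n (Iv n k₀ t) S (by rw [hIc, hS.2])
          rw [hIc] at hlow
          exact le_trans hlow (Finset.card_le_card hsub)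
  -- step 3: combine
  have hsum : ∑ t ∈ Finset.range (m+1),
      (𝒜.filter fun S => S.card = k₀ + t).card * (Nat.factorial (k₀+t) * Nat.factorial (n - (k₀+t)))
      ≤ Nat.factorial n := le_trans (Finset.sum_le_sum hfib) htotal
  have hmid : (𝒜.filter fun S => k₀ ≤ S.card ∧ S.card ≤ k₀ + m).card
      = ∑ t ∈ Finset.range (m+1), (𝒜.filter fun S => S.card = k₀ + t).card := by
    rw [Finset.card_eq_sum_card_fiberwise (f := fun S => S.card - k₀) (t := Finset.range (m+1))
      (by intro S hS
          rw [Finset.mem_coe] at hS ⊢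
          rw [Finset.mem_filter] at hS
          rw [Finset.mem_range]
          show S.card - k₀ < m + 1
          have := hS.2
          omega)]
    apply Finset.sum_congr rfl
    intro t ht
    rw [Finset.mem_range] at ht
    congr 1
    rw [Finset.filter_filter]
    apply Finset.filter_congr
    intro S _
    show (k₀ ≤ S.card ∧ S.card ≤ k₀ + m) ∧ S.card - k₀ = t ↔ S.card = k₀ + t
    omega
  have hfinal : (𝒜.filter fun S => k₀ ≤ S.card ∧ S.card ≤ k₀ + m).card * Nat.factorial n
      ≤ n.choose (n/2) * Nat.factorial n := by
    rw [hmid, Finset.sum_mul]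
    calc ∑ t ∈ Finset.range (m+1), (𝒜.filter fun S => S.card = k₀ + t).card * Nat.factorial n
        ≤ ∑ t ∈ Finset.range (m+1), n.choose (n/2) *
            ((𝒜.filter fun S => S.card = k₀ + t).card * (Nat.factorial (k₀+t) * Nat.factorial (n - (k₀+t)))) := by
          apply Finset.sum_le_sum
          intro t ht
          rw [Finset.mem_range] at ht
          have h1 : Nat.factorial n = n.choose (k₀+t) * (Nat.factorial (k₀+t) * Nat.factorial (n - (k₀+t))) := by
            have := Nat.choose_mul_factorial_mul_factorial (show k₀ + t ≤ n by omega)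
            rw [← this]; ring
          rw [h1]
          have h2 : n.choose (k₀+t) ≤ n.choose (n/2) := Nat.choose_le_middle _ _
          calc (𝒜.filter fun S => S.card = k₀ + t).card * (n.choose (k₀+t) * (Nat.factorial (k₀+t) * Nat.factorial (n - (k₀+t))))
              ≤ (𝒜.filter fun S => S.card = k₀ + t).card * (n.choose (n/2) * (Nat.factorial (k₀+t) * Nat.factorial (n - (k₀+t)))) := by
                apply Nat.mul_le_mul_left
                exact Nat.mul_le_mul_right _ h2
            _ = n.choose (n/2) * ((𝒜.filter fun S => S.card = k₀ + t).card * (Nat.factorial (k₀+t) * Nat.factorial (n - (k₀+t)))) := by ring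
      _ = n.choose (n/2) * ∑ t ∈ Finset.range (m+1),
            (𝒜.filter fun S => S.card = k₀ + t).card * (Nat.factorial (k₀+t) * Nat.factorial (n - (k₀+t))) := by
          rw [Finset.mul_sum]
      _ ≤ n.choose (n/2) * Nat.factorial n := Nat.mul_le_mul_left _ hsum
  exact Nat.le_of_mul_le_mul_right hfinal (Nat.factorial_pos n)


lemma count_small (n a : ℕ) :
    (Finset.univ.filter fun S : Finset (Fin n) => S.card < a).card
      = ∑ s ∈ Finset.range a, n.choose s := by
  classical
  rw [Finset.card_eq_sum_card_fiberwise (f := fun S : Finset (Fin n) => S.card)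
    (t := Finset.range a)
    (by intro S hS
        rw [Finset.mem_coe] at hS ⊢
        rw [Finset.mem_filter] at hS
        rw [Finset.mem_range]
        exact hS.2)]
  apply Finset.sum_congr rfl
  intro s hs
  rw [Finset.mem_range] at hs
  have : (Finset.univ.filter fun S : Finset (Fin n) => S.card < a).filter
      (fun S => S.card = s) = Finset.powersetCard s Finset.univ := by
    ext S
    simp only [Finset.mem_filter, Finset.mem_univ, true_and,
      Finset.mem_powersetCard_univ]
    constructor
    · exact fun h => h.2
    · intro h; exact ⟨by omega, h⟩
  rw [this, Finset.card_powersetCard, Finset.card_univ, Fintype.card_fin]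

lemma choose_ratio {n j : ℕ} (h : 11*j + 6 ≤ 5*n) :
    6 * n.choose j ≤ 5 * n.choose (j+1) := by
  have key := Nat.choose_succ_right_eq n j
  have h1 : 6 * n.choose j * (j+1) ≤ 5 * n.choose (j+1) * (j+1) := by
    have : 5 * (n.choose (j+1) * (j+1)) = 5 * (n.choose j * (n - j)) := by rw [key]
    calc 6 * n.choose j * (j+1) = n.choose j * (6*(j+1)) := by ring
      _ ≤ n.choose j * (5*(n-j)) := Nat.mul_le_mul_left _ (by omega)
      _ = 5 * (n.choose j * (n-j)) := by ring
      _ = 5 * n.choose (j+1) * (j+1) := by rw [← key]; ring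
  exact Nat.le_of_mul_le_mul_right h1 (by omega)

lemma choose_decay {n b : ℕ} (hb : 11*b ≤ 5*n + 5) :
    ∀ d s : ℕ, s + d = b → (n.choose s : ℝ) ≤ (5/6)^d * n.choose b := by
  intro d
  induction d with
  | zero => intro s hs; rw [show s = b by omega]; simp
  | succ d ih =>
    intro s hs
    have h1 : (n.choose s : ℝ) ≤ (5/6) * n.choose (s+1) := by
      have := choose_ratio (n := n) (j := s) (by omega)
      have hcast : (6 : ℝ) * n.choose s ≤ 5 * n.choose (s+1) := by exact_mod_cast this
      linarith
    have h2 := ih (s+1) (by omega)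
    calc (n.choose s : ℝ) ≤ (5/6) * n.choose (s+1) := h1
      _ ≤ (5/6) * ((5/6)^d * n.choose b) := by
          apply mul_le_mul_of_nonneg_left h2 (by norm_num)
      _ = (5/6)^(d+1) * n.choose b := by ring

lemma tail_sum {n a b : ℕ} (hab : a ≤ b) (hb : 11*b ≤ 5*n + 5) :
    ∑ s ∈ Finset.range a, (n.choose s : ℝ) ≤ 6 * (5/6)^(b+1-a) * n.choose b := by
  have hstep : ∀ s ∈ Finset.range a,
      (n.choose s : ℝ) ≤ (5/6)^(b+1-a) * ((5/6)^(a-1-s) * n.choose b) := by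
    intro s hs
    rw [Finset.mem_range] at hs
    have := choose_decay hb (b - s) s (by omega)
    calc (n.choose s : ℝ) ≤ (5/6)^(b-s) * n.choose b := this
      _ = (5/6)^(b+1-a) * ((5/6)^(a-1-s) * n.choose b) := by
          rw [← mul_assoc, ← pow_add]
          congr 2
          omega
  calc ∑ s ∈ Finset.range a, (n.choose s : ℝ)
      ≤ ∑ s ∈ Finset.range a, (5/6 : ℝ)^(b+1-a) * ((5/6)^(a-1-s) * (n.choose b : ℝ)) :=
        Finset.sum_le_sum hstep
    _ = (5/6)^(b+1-a) * ((∑ s ∈ Finset.range a, (5/6 : ℝ)^(a-1-s)) * (n.choose b : ℝ)) := by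
        rw [Finset.sum_mul, Finset.mul_sum]
    _ ≤ (5/6)^(b+1-a) * (6 * (n.choose b : ℝ)) := by
        apply mul_le_mul_of_nonneg_left _ (by positivity)
        apply mul_le_mul_of_nonneg_right _ (by positivity)
        have hre : ∑ s ∈ Finset.range a, (5/6 : ℝ)^(a-1-s) = ∑ i ∈ Finset.range a, (5/6 : ℝ)^i := by
          rw [← Finset.sum_range_reflect]
          apply Finset.sum_congr rfl
          intro i hi
          rw [Finset.mem_range] at hi
          congr 1
          omega
        rw [hre]
        have : ∑ i ∈ Finset.range a, (5/6 : ℝ)^i = (1 - (5/6)^a) / (1 - 5/6) := by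
          rw [geom_sum_eq (by norm_num)]
          rw [div_eq_div_iff (by norm_num) (by norm_num)]
          ring
        rw [this]
        have hp : (0:ℝ) ≤ (5/6)^a := by positivity
        rw [div_le_iff₀ (by norm_num)]
        linarith
    _ = 6 * (5/6)^(b+1-a) * n.choose b := by ring


theorem stmt_2 (ε : ℝ) (hε : 0 < ε) :
    ∃ N : ℕ, ∀ n ≥ N, ∀ 𝒜 : Finset (Finset (Fin n)),
      (∀ A ∈ 𝒜, ∀ B ∈ 𝒜, A ≠ B → (A \ B).card ≠ 2 * (B \ A).card) →
      (𝒜.card : ℝ) ≤ (1 + ε) * (n.choose (n / 2) : ℝ) := by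
  classical
  obtain ⟨K, hK⟩ : ∃ K : ℕ, (5/6 : ℝ)^K < ε/12 :=
    exists_pow_lt_of_lt_one (by positivity) (by norm_num)
  refine ⟨12*K + 2000, fun n hn 𝒜 h𝒜 => ?_⟩
  set k₀ := 4*n/11 with hk₀def
  set m := 3*n/11 with hmdef
  set b := (5*n+5)/11 with hbdef
  have hmk : m ≤ k₀ := by omega
  have hn2 : k₀ + 2*m ≤ n := by omega
  have hk₀b : k₀ ≤ b := by omega
  have hbineq : 11*b ≤ 5*n + 5 := by omega
  have hhighb : n - (k₀+m) ≤ b := by omega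
  have hglow : K ≤ b + 1 - k₀ := by omega
  have hghigh : K ≤ b + 1 - (n - (k₀+m)) := by omega
  have hkmn : k₀ + m < n := by omega
  -- split the family
  have hsplit1 := Finset.card_filter_add_card_filter_not
    (s := 𝒜) (p := fun S => S.card < k₀)
  have hsplit2 := Finset.card_filter_add_card_filter_not
    (s := 𝒜.filter (fun S => ¬ S.card < k₀)) (p := fun S => S.card ≤ k₀ + m)
  -- middle bound
  have hmideq : (𝒜.filter (fun S => ¬ S.card < k₀)).filter (fun S => S.card ≤ k₀ + m)
      = 𝒜.filter (fun S => k₀ ≤ S.card ∧ S.card ≤ k₀ + m) := by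
    rw [Finset.filter_filter]
    apply Finset.filter_congr
    intro S _
    show ¬ S.card < k₀ ∧ S.card ≤ k₀ + m ↔ k₀ ≤ S.card ∧ S.card ≤ k₀ + m
    omega
  have hmid : ((𝒜.filter (fun S => ¬ S.card < k₀)).filter (fun S => S.card ≤ k₀ + m)).card
      ≤ n.choose (n/2) := by
    rw [hmideq]
    exact middle_bound hmk hn2 𝒜 h𝒜
  -- low bound
  have hlow : (𝒜.filter (fun S => S.card < k₀)).card ≤ ∑ s ∈ Finset.range k₀, n.choose s := by
    rw [← count_small n k₀]
    exact Finset.card_le_card (Finset.filter_subset_filter _ (Finset.subset_univ 𝒜))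
  -- high bound
  have hhigh : ((𝒜.filter (fun S => ¬ S.card < k₀)).filter (fun S => ¬ S.card ≤ k₀ + m)).card
      ≤ ∑ s ∈ Finset.range (n - (k₀+m)), n.choose s := by
    rw [← count_small n (n - (k₀+m))]
    apply Finset.card_le_card_of_injOn (fun S => Sᶜ)
    · intro S hS
      simp only [Finset.mem_coe, Finset.mem_filter, Finset.mem_univ, true_and] at hS ⊢
      have hcS : S.card ≤ n := by
        have := Finset.card_le_univ S
        rwa [Fintype.card_fin] at this
      rw [Finset.card_compl, Fintype.card_fin]
      have h2 := hS.2
      omega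
    · intro x _ y _ hxy
      exact compl_injective hxy
  -- real casts of tails
  have hnn : (0:ℝ) ≤ (n.choose (n/2) : ℝ) := by positivity
  have hchb : (n.choose b : ℝ) ≤ (n.choose (n/2) : ℝ) := by
    exact_mod_cast Nat.choose_le_middle b n
  have tail_bound : ∀ a : ℕ, a ≤ b → K ≤ b + 1 - a →
      (∑ s ∈ Finset.range a, (n.choose s : ℝ)) ≤ (ε/2) * n.choose (n/2) := by
    intro a hab hKa
    calc (∑ s ∈ Finset.range a, (n.choose s : ℝ))
        ≤ 6 * (5/6)^(b+1-a) * n.choose b := tail_sum hab hbineq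
      _ ≤ 6 * (5/6)^K * n.choose b := by
          apply mul_le_mul_of_nonneg_right _ (by positivity)
          apply mul_le_mul_of_nonneg_left _ (by norm_num)
          exact pow_le_pow_of_le_one (by norm_num) (by norm_num) hKa
      _ ≤ 6 * (ε/12) * n.choose b := by
          apply mul_le_mul_of_nonneg_right _ (by positivity)
          apply mul_le_mul_of_nonneg_left (le_of_lt hK) (by norm_num)
      _ = (ε/2) * n.choose b := by ring
      _ ≤ (ε/2) * n.choose (n/2) := by
          apply mul_le_mul_of_nonneg_left hchb (by positivity)
  have hlowR : ((𝒜.filter (fun S => S.card < k₀)).card : ℝ) ≤ (ε/2) * n.choose (n/2) := by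
    refine le_trans ?_ (tail_bound k₀ hk₀b hglow)
    calc ((𝒜.filter (fun S => S.card < k₀)).card : ℝ)
        ≤ ((∑ s ∈ Finset.range k₀, n.choose s : ℕ) : ℝ) := by exact_mod_cast hlow
      _ = ∑ s ∈ Finset.range k₀, (n.choose s : ℝ) := by push_cast; ring
  have hhighR : (((𝒜.filter (fun S => ¬ S.card < k₀)).filter (fun S => ¬ S.card ≤ k₀ + m)).card : ℝ)
      ≤ (ε/2) * n.choose (n/2) := by
    refine le_trans ?_ (tail_bound (n - (k₀+m)) hhighb hghigh)
    calc (((𝒜.filter (fun S => ¬ S.card < k₀)).filter (fun S => ¬ S.card ≤ k₀ + m)).card : ℝ)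
        ≤ ((∑ s ∈ Finset.range (n - (k₀+m)), n.choose s : ℕ) : ℝ) := by exact_mod_cast hhigh
      _ = ∑ s ∈ Finset.range (n - (k₀+m)), (n.choose s : ℝ) := by push_cast; ring
  have hmidR : (((𝒜.filter (fun S => ¬ S.card < k₀)).filter (fun S => S.card ≤ k₀ + m)).card : ℝ)
      ≤ (n.choose (n/2) : ℝ) := by exact_mod_cast hmid
  have hcardeq : (𝒜.card : ℝ)
      = ((𝒜.filter (fun S => S.card < k₀)).card : ℝ)
        + (((𝒜.filter (fun S => ¬ S.card < k₀)).filter (fun S => S.card ≤ k₀ + m)).card : ℝ)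
        + (((𝒜.filter (fun S => ¬ S.card < k₀)).filter (fun S => ¬ S.card ≤ k₀ + m)).card : ℝ) := by
    have : 𝒜.card = (𝒜.filter (fun S => S.card < k₀)).card
        + (((𝒜.filter (fun S => ¬ S.card < k₀)).filter (fun S => S.card ≤ k₀ + m)).card
          + ((𝒜.filter (fun S => ¬ S.card < k₀)).filter (fun S => ¬ S.card ≤ k₀ + m)).card) := by
      omega
    rw [this]; push_cast; ring
  rw [hcardeq]
  calc ((𝒜.filter (fun S => S.card < k₀)).card : ℝ)
        + (((𝒜.filter (fun S => ¬ S.card < k₀)).filter (fun S => S.card ≤ k₀ + m)).card : ℝ)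
        + (((𝒜.filter (fun S => ¬ S.card < k₀)).filter (fun S => ¬ S.card ≤ k₀ + m)).card : ℝ)
      ≤ (ε/2) * n.choose (n/2) + (n.choose (n/2) : ℝ) + (ε/2) * n.choose (n/2) := by
        gcongr
    _ = (1 + ε) * (n.choose (n/2) : ℝ) := by ring
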